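/- arXiv:1205.6627 — 2 statements merged into one kernel-verified Lean document; each statement's English description precedes it below -/
import Mathlib

section
/- Let Y, Z ⊆ X be subsets such that Adj y z holds for every y ∈ Y and every z ∈ Z. Then for every g in the Lie subalgebra ⟨Y⟩ and every h in the Lie subalgebra ⟨Z⟩ one has ⁅g, h⁆ = 0 in L. -/
noncomputable section

/-- The Lie ideal of relations of the partially commutative Lie algebra:
it is generated by the brackets `⁅x, y⁆` of generators with `G.Adj x y`. -/
def pcIdeal (R : Type*) [CommRing R] {X : Type*} (G : SimpleGraph X) :
    LieIdeal R (FreeLieAlgebra R X) :=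
  LieSubmodule.lieSpan R (FreeLieAlgebra R X)
    {w | ∃ x y : X, G.Adj x y ∧ w = ⁅FreeLieAlgebra.of R x, FreeLieAlgebra.of R y⁆}

/-- The partially commutative Lie algebra `L_R(X; G)`. -/
abbrev PCLieAlgebra (R : Type*) [CommRing R] (X : Type*) (G : SimpleGraph X) :=
  FreeLieAlgebra R X ⧸ pcIdeal R G

/-- The canonical image `ι x` of a generator `x : X` in `L_R(X; G)`. -/
def pcGen (R : Type*) [CommRing R] {X : Type*} (G : SimpleGraph X) (x : X) :
    PCLieAlgebra R X G :=
  LieSubmodule.Quotient.mk (N := pcIdeal R G) (FreeLieAlgebra.of R x)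

/-- The Lie `R`-subalgebra `⟨Y⟩` of `L_R(X; G)` generated by `{ι y : y ∈ Y}`. -/
def genSpan (R : Type*) [CommRing R] {X : Type*} (G : SimpleGraph X) (Y : Set X) :
    LieSubalgebra R (PCLieAlgebra R X G) :=
  LieSubalgebra.lieSpan R (PCLieAlgebra R X G) (pcGen R G '' Y)

/-- The complement graph on a subset `Y ⊆ X`: distinct vertices of `Y` are adjacent
iff they are not adjacent in `G`. -/
def complOn {X : Type*} (G : SimpleGraph X) (Y : Set X) : SimpleGraph Y where
  Adj a b := (a : X) ≠ (b : X) ∧ ¬ G.Adj a b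
  symm := ⟨fun _ _ h => ⟨fun e => h.1 e.symm, fun e => h.2 (G.adj_symm e)⟩⟩
  loopless := ⟨fun _ h => h.1 rfl⟩

/-- The vertex set (as a subset of `X`) of a connected component of the
complement graph on `Y`. -/
def compSet {X : Type*} (G : SimpleGraph X) (Y : Set X)
    (c : (complOn G Y).ConnectedComponent) : Set X :=
  {x : X | ∃ hx : x ∈ Y, (complOn G Y).connectedComponentMk ⟨x, hx⟩ = c}

/-- `Y` is the support of `g`: `g ∈ ⟨Y⟩`, and `Y ⊆ Z` whenever `g ∈ ⟨Z⟩`. -/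
def isSupport (R : Type*) [CommRing R] {X : Type*} (G : SimpleGraph X)
    (g : PCLieAlgebra R X G) (Y : Set X) : Prop :=
  g ∈ genSpan R G Y ∧ ∀ Z : Set X, g ∈ genSpan R G Z → Y ⊆ Z

/-- If every vertex of `Y` is adjacent to every vertex of `Z`, then every element of
the Lie subalgebra `⟨Y⟩` commutes with every element of `⟨Z⟩`. -/
theorem bracket_eq_zero_of_adj_sets
    (R : Type*) [CommRing R] [IsDomain R] (X : Type*) [Fintype X] (G : SimpleGraph X)
    (Y Z : Set X) (hYZ : ∀ y ∈ Y, ∀ z ∈ Z, G.Adj y z)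
    (g h : PCLieAlgebra R X G) (hg : g ∈ genSpan R G Y) (hh : h ∈ genSpan R G Z) :
    ⁅g, h⁆ = 0 := by
  -- centralizer of an element as a Lie subalgebra
  let cent : PCLieAlgebra R X G → LieSubalgebra R (PCLieAlgebra R X G) := fun a =>
    { carrier := {b | ⁅a, b⁆ = 0}
      add_mem' := fun hx hy => by simp_all [Set.mem_setOf_eq, lie_add]
      zero_mem' := by simp
      smul_mem' := fun c x hx => by simp_all [Set.mem_setOf_eq]
      lie_mem' := fun {x y} hx hy => by
        simp only [Set.mem_setOf_eq] at *
        rw [leibniz_lie, hx, hy, zero_lie, lie_zero, add_zero] }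
  have key : ∀ y ∈ Y, ∀ z ∈ Z, ⁅pcGen R G y, pcGen R G z⁆ = 0 := by
    intro y hy z hz
    have hmem : (⁅FreeLieAlgebra.of R y, FreeLieAlgebra.of R z⁆ : FreeLieAlgebra R X)
        ∈ pcIdeal R G :=
      LieSubmodule.subset_lieSpan ⟨y, z, hYZ y hy z hz, rfl⟩
    have : ⁅pcGen R G y, pcGen R G z⁆ =
        LieSubmodule.Quotient.mk (N := pcIdeal R G)
          ⁅FreeLieAlgebra.of R y, FreeLieAlgebra.of R z⁆ := rfl
    rw [this]
    exact LieSubmodule.Quotient.mk_eq_zero'.2 hmem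
  -- first: each generator of Y centralizes all of ⟨Z⟩
  have step1 : ∀ y ∈ Y, genSpan R G Z ≤ cent (pcGen R G y) := by
    intro y hy
    apply LieSubalgebra.lieSpan_le.2
    rintro _ ⟨z, hz, rfl⟩
    exact key y hy z hz
  -- second: h centralizes all of ⟨Y⟩
  have step2 : genSpan R G Y ≤ cent h := by
    apply LieSubalgebra.lieSpan_le.2
    rintro _ ⟨y, hy, rfl⟩
    show ⁅h, pcGen R G y⁆ = 0
    have := step1 y hy hh
    rw [← lie_skew, this, neg_zero]
  have hz : ⁅h, g⁆ = 0 := step2 hg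
  rw [← lie_skew, hz, neg_zero]
end
end

section
/- Let y_1, …, y_k be pairwise distinct elements of X, let α_1, …, α_k ∈ R with α_i ≠ 0 for all i, let β_1, …, β_k ∈ R, and set g = Σ_{i=1}^k α_i • ι y_i and h = Σ_{i=1}^k β_i • ι y_i. Suppose ⁅g, h⁆ = 0. If the vertices y_s and y_t are joined by a path in the complement graph on {y_1, …, y_k} (the simple graph on this set in which distinct vertices are adjacent iff they are not adjacent in G), then α_s * β_t = α_t * β_s. -/
noncomputable section

attribute [local instance 100] LieRing.ofAssociativeRing

private def Emat (R : Type*) [CommRing R] (a b : Fin 3) : Matrix (Fin 3) (Fin 3) R :=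
  Matrix.single a b 1

private lemma lie_Emat (R : Type*) [CommRing R] :
    ⁅Emat R 0 1, Emat R 1 2⁆ = Emat R 0 2 := by
  rw [Ring.lie_def]
  ext a b
  fin_cases a <;> fin_cases b <;>
    simp [Emat, Matrix.mul_apply, Matrix.sub_apply, Matrix.single, Fin.sum_univ_three]

lemma key_lemma
    (R : Type*) [CommRing R] (X : Type*) [Fintype X] (G : SimpleGraph X)
    (k : ℕ) (y : Fin k → X) (hy : Function.Injective y)
    (α β : Fin k → R)
    (hgh : ⁅∑ i, α i • pcGen R G (y i), ∑ i, β i • pcGen R G (y i)⁆ = 0)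
    (i j : Fin k) (hij : i ≠ j) (hadj : ¬ G.Adj (y i) (y j)) :
    α i * β j = α j * β i := by
  classical
  set e := Emat R 0 1 with he
  set f := Emat R 1 2 with hf
  set c := Emat R 0 2 with hc
  have hef : ⁅e, f⁆ = c := lie_Emat R
  have hfe : ⁅f, e⁆ = -c := by rw [← lie_skew, hef]
  set v : X → Matrix (Fin 3) (Fin 3) R :=
    fun a => if a = y i then e else if a = y j then f else 0 with hv
  set φ := FreeLieAlgebra.lift R (L := Matrix (Fin 3) (Fin 3) R) v with hφ
  have hker : pcIdeal R G ≤ φ.ker := by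
    rw [pcIdeal, LieSubmodule.lieSpan_le]
    rintro w ⟨a, b, hab, rfl⟩
    simp only [SetLike.mem_coe, LieHom.mem_ker, LieHom.map_lie, hφ, FreeLieAlgebra.lift_of_apply]
    by_cases ha1 : a = y i
    · by_cases hb1 : b = y i
      · simp [hv, ha1, hb1]
      · by_cases hb2 : b = y j
        · exact absurd (ha1 ▸ hb2 ▸ hab) hadj
        · simp [hv, hb1, hb2]
    · by_cases ha2 : a = y j
      · by_cases hb1 : b = y i
        · exact absurd (G.adj_symm (ha2 ▸ hb1 ▸ hab)) hadj
        · by_cases hb2 : b = y j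
          · simp [hv, ha2, hb2, ha1]
          · simp [hv, hb1, hb2]
      · simp [hv, ha1, ha2]
  set A : FreeLieAlgebra R X := ∑ l, α l • FreeLieAlgebra.of R (y l) with hA
  set B : FreeLieAlgebra R X := ∑ l, β l • FreeLieAlgebra.of R (y l) with hB
  have hmk : ∀ z : FreeLieAlgebra R X,
      (LieSubmodule.Quotient.mk (N := pcIdeal R G) z)
        = (pcIdeal R G : Submodule R (FreeLieAlgebra R X)).mkQ z := fun _ => rfl
  have hgA : (∑ l, α l • pcGen R G (y l)) = LieSubmodule.Quotient.mk (N := pcIdeal R G) A := by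
    simp only [pcGen, hmk, hA, map_sum, LinearMap.map_smul]
    rfl
  have hgB : (∑ l, β l • pcGen R G (y l)) = LieSubmodule.Quotient.mk (N := pcIdeal R G) B := by
    simp only [pcGen, hmk, hB, map_sum, LinearMap.map_smul]
    rfl
  rw [hgA, hgB, ← LieSubmodule.Quotient.mk_bracket, LieSubmodule.Quotient.mk_eq_zero'] at hgh
  have hφ0 : φ ⁅A, B⁆ = 0 := (LieHom.mem_ker).mp (hker hgh)
  have hsum : ∀ γ : Fin k → R, φ (∑ l, γ l • FreeLieAlgebra.of R (y l)) = γ i • e + γ j • f := by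
    intro γ
    have h1 : ∀ l, φ (γ l • FreeLieAlgebra.of R (y l))
        = (if l = i then γ i • e else 0) + (if l = j then γ j • f else 0) := by
      intro l
      rw [map_smul, hφ, FreeLieAlgebra.lift_of_apply, hv]
      by_cases hl : l = i
      · simp [hl, hij, hy.eq_iff]
      · by_cases hl2 : l = j
        · have h'' : y j ≠ y i := fun h => hij (hy h).symm
          simp [hl2, h'', Ne.symm hij]
        · have h1' : y l ≠ y i := fun h => hl (hy h)
          have h2' : y l ≠ y j := fun h => hl2 (hy h)
          simp [hl, hl2, h1', h2']
    rw [← LieHom.coe_toLinearMap, map_sum]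
    simp only [LieHom.coe_toLinearMap, h1, Finset.sum_add_distrib, Finset.sum_ite_eq',
      Finset.mem_univ, if_true]
  rw [hA, hB] at hφ0
  rw [LieHom.map_lie, hsum α, hsum β] at hφ0
  have h02 := congrFun (congrFun hφ0 0) 2
  simp only [Ring.lie_def, he, hf, Emat, Matrix.sub_apply, Matrix.mul_apply, Matrix.add_apply,
    Matrix.smul_apply, Matrix.single, Matrix.of_apply, Fin.sum_univ_three,
    Matrix.zero_apply] at h02
  norm_num [Fin.ext_iff] at h02
  have h0 : α i * β j - α j * β i = 0 := by linear_combination h02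
  exact sub_eq_zero.mp h0

/-- If two linear combinations `g = Σ αᵢ • ι yᵢ` and `h = Σ βᵢ • ι yᵢ` of pairwise
distinct generators commute (with all `αᵢ ≠ 0`), and `y s`, `y t` are joined by a path
in the complement graph on `{y₁, …, y_k}`, then `α s * β t = α t * β s`. -/
theorem cross_eq_of_reachable_in_complement
    (R : Type*) [CommRing R] [IsDomain R] (X : Type*) [Fintype X] (G : SimpleGraph X)
    (k : ℕ) (y : Fin k → X) (hy : Function.Injective y)
    (α β : Fin k → R) (hα : ∀ i, α i ≠ 0)
    (hgh : ⁅∑ i, α i • pcGen R G (y i), ∑ i, β i • pcGen R G (y i)⁆ = 0)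
    (s t : Fin k)
    (hpath : (complOn G (Set.range y)).Reachable
        ⟨y s, Set.mem_range_self s⟩ ⟨y t, Set.mem_range_self t⟩) :
    α s * β t = α t * β s := by
  classical
  have key : ∀ i j : Fin k, i ≠ j → ¬ G.Adj (y i) (y j) → α i * β j = α j * β i :=
    fun i j hij hadj => key_lemma R X G k y hy α β hgh i j hij hadj
  suffices H : ∀ u v : (Set.range y : Set X), (complOn G (Set.range y)).Reachable u v →
      ∀ i j : Fin k, y i = (u : X) → y j = (v : X) → α i * β j = α j * β i by
    exact H _ _ hpath s t rfl rfl
  intro u v huv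
  obtain ⟨w⟩ := huv
  induction w with
  | nil =>
    intro i j hi hj
    have : i = j := hy (hi.trans hj.symm)
    subst this
    rfl
  | @cons u b v hadj p ih =>
    intro i j hi hj
    obtain ⟨m, hm⟩ := b.2
    have h1 : α i * β m = α m * β i := by
      refine key i m (fun e => hadj.1 ?_) ?_
      · rw [← hi, ← hm, e]
      · rw [hi, hm]; exact hadj.2
    have h2 : α m * β j = α j * β m := ih m j hm hj
    have := mul_left_cancel₀ (hα m)
      (show α m * (α i * β j) = α m * (α j * β i) by linear_combination α i * h2 + α j * h1)
    exact this
end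
end
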